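/- arXiv:2007.06208 — 2 statements merged into one kernel-verified Lean document; each statement's English description precedes it below -/
import Mathlib

section
/- The polynomial [(1 + t^(2n+2))(1 + t^6) - t^2(1 + t^2)(t^4 + t^(2n-2))] · (1 - t^(2n+2))(1 - t^(2n))(1 - t^(2n-2)) is divisible by (1 - t^2)^3 (1 - t^4)^2 in ℤ[t] for every integer n ≥ 2. -/
open Polynomial

/-- `1 - X^a` divides `1 - X^(a*k)` in `ℤ[X]`. -/
lemma one_sub_X_pow_dvd (a k : ℕ) : (1 - X ^ a : ℤ[X]) ∣ 1 - X ^ (a * k) := by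
  have h := sub_dvd_pow_sub_pow (X ^ a : ℤ[X]) 1 k
  rw [one_pow, ← pow_mul] at h
  simpa [neg_sub] using neg_dvd.mpr (dvd_neg.mpr h)

/-- For every `n ≥ 2`, `(1 - t^2)^3 (1 - t^4)^2` divides
`[(1 + t^(2n+2))(1 + t^6) - t^2(1 + t^2)(t^4 + t^(2n-2))] ·
(1 - t^(2n+2))(1 - t^(2n))(1 - t^(2n-2))` in `ℤ[t]`
(Poincaré polynomial of `K_n = M₀(Gr(2,n+1),2)`). -/
theorem poincare_Kn_is_polynomial (n : ℕ) (hn : 2 ≤ n) :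
    ((1 - X ^ 2) ^ 3 * (1 - X ^ 4) ^ 2 : ℤ[X]) ∣
      ((1 + X ^ (2 * n + 2)) * (1 + X ^ 6) -
          X ^ 2 * (1 + X ^ 2) * (X ^ 4 + X ^ (2 * n - 2))) *
        ((1 - X ^ (2 * n + 2)) * (1 - X ^ (2 * n)) * (1 - X ^ (2 * n - 2))) := by
  obtain ⟨m, rfl⟩ : ∃ m, n = m + 2 := ⟨n - 2, by omega⟩
  have e1 : 2 * (m + 2) + 2 = 2 * m + 6 := by ring
  have e2 : 2 * (m + 2) = 2 * m + 4 := by ring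
  have e3 : 2 * m + 4 - 2 = 2 * m + 2 := by omega
  rw [e1, e2, e3]
  have key : ((1 + X ^ (2 * m + 6)) * (1 + X ^ 6) -
          X ^ 2 * (1 + X ^ 2) * (X ^ 4 + X ^ (2 * m + 2))) *
        ((1 - X ^ (2 * m + 6)) * (1 - X ^ (2 * m + 4)) * (1 - X ^ (2 * m + 2)))
      = ((1 - X ^ 8) * (1 - X ^ (2 * m + 6)) * (1 - X ^ (2 * m + 2))) *
        ((1 - X ^ (2 * m + 4)) * (1 - X ^ (2 * m + 4)) : ℤ[X]) := by
    ring
  rw [key]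
  rcases Nat.even_or_odd m with ⟨k, hk⟩ | ⟨k, hk⟩
  · -- m even : 2m+4 = 4(k+2), use (1-X^4)^2 on the square
    have h4 : ((1 - X ^ 4) ^ 2 : ℤ[X]) ∣ (1 - X ^ (2 * m + 4)) * (1 - X ^ (2 * m + 4)) := by
      have h : (1 - X ^ 4 : ℤ[X]) ∣ 1 - X ^ (2 * m + 4) := by
        have := one_sub_X_pow_dvd 4 (k + 1)
        rwa [show 4 * (k + 1) = 2 * m + 4 by omega] at this
      calc ((1 - X ^ 4) ^ 2 : ℤ[X]) = (1 - X ^ 4) * (1 - X ^ 4) := by ring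
        _ ∣ _ := mul_dvd_mul h h
    have h2 : ((1 - X ^ 2) ^ 3 : ℤ[X]) ∣
        (1 - X ^ 8) * (1 - X ^ (2 * m + 6)) * (1 - X ^ (2 * m + 2)) := by
      have a1 : (1 - X ^ 2 : ℤ[X]) ∣ 1 - X ^ 8 := by
        simpa using one_sub_X_pow_dvd 2 4
      have a2 : (1 - X ^ 2 : ℤ[X]) ∣ 1 - X ^ (2 * m + 6) := by
        have := one_sub_X_pow_dvd 2 (m + 3)
        rwa [show 2 * (m + 3) = 2 * m + 6 by omega] at this
      have a3 : (1 - X ^ 2 : ℤ[X]) ∣ 1 - X ^ (2 * m + 2) := by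
        have := one_sub_X_pow_dvd 2 (m + 1)
        rwa [show 2 * (m + 1) = 2 * m + 2 by omega] at this
      calc ((1 - X ^ 2) ^ 3 : ℤ[X]) = (1 - X ^ 2) * (1 - X ^ 2) * (1 - X ^ 2) := by ring
        _ ∣ _ := mul_dvd_mul (mul_dvd_mul a1 a2) a3
    exact mul_dvd_mul h2 h4
  · -- m odd : 2m+6 and 2m+2 are divisible by 4
    have b1 : (1 - X ^ 4 : ℤ[X]) ∣ 1 - X ^ (2 * m + 6) := by
      have := one_sub_X_pow_dvd 4 (k + 2)
      rwa [show 4 * (k + 2) = 2 * m + 6 by omega] at this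
    have b2 : (1 - X ^ 4 : ℤ[X]) ∣ 1 - X ^ (2 * m + 2) := by
      have := one_sub_X_pow_dvd 4 (k + 1)
      rwa [show 4 * (k + 1) = 2 * m + 2 by omega] at this
    have a1 : (1 - X ^ 2 : ℤ[X]) ∣ 1 - X ^ 8 := by
      simpa using one_sub_X_pow_dvd 2 4
    have a2 : (1 - X ^ 2 : ℤ[X]) ∣ 1 - X ^ (2 * m + 4) := by
      have := one_sub_X_pow_dvd 2 (m + 2)
      rwa [show 2 * (m + 2) = 2 * m + 4 by omega] at this
    calc ((1 - X ^ 2) ^ 3 * (1 - X ^ 4) ^ 2 : ℤ[X])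
        = ((1 - X ^ 2) * (1 - X ^ 4) * (1 - X ^ 4)) *
          ((1 - X ^ 2) * (1 - X ^ 2)) := by ring
      _ ∣ _ := mul_dvd_mul (mul_dvd_mul (mul_dvd_mul a1 b1) b2) (mul_dvd_mul a2 a2)
end

section
/- For every integer n ≥ 2, the polynomial (1 - t^(2n)) · [(1 - t^(2n+2))(1 - t^(2n-2)) - t^2(1 - t^(4⌊(n-1)/2⌋))(1 - t^(4⌊n/2⌋))] is divisible by (1 - t^2)^2 (1 - t^4) in ℤ[t]. -/
open Polynomial

lemma one_sub_pow_dvd (a m : ℕ) : (1 - X ^ a : ℤ[X]) ∣ 1 - X ^ (a * m) := by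
  have h := sub_dvd_pow_sub_pow (X ^ a : ℤ[X]) 1 m
  simp only [one_pow, ← pow_mul] at h
  have h2 : -(X ^ a - 1 : ℤ[X]) ∣ -(X ^ (a * m) - 1) := (dvd_neg.mpr h).neg_left
  simpa [neg_sub] using h2

/-- For every `n ≥ 2`, `(1 - t^2)^2 (1 - t^4)` divides
`(1 - t^(2n)) · [(1 - t^(2n+2))(1 - t^(2n-2)) - t^2(1 - t^(4⌊(n-1)/2⌋))(1 - t^(4⌊n/2⌋))]`
in `ℤ[t]` (intersection Poincaré polynomial of `ℙ(Sym²ℂ²⊗ℂⁿ)//SL(2)`). -/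
theorem ip_git_quotient_is_polynomial (n : ℕ) (hn : 2 ≤ n) :
    ((1 - X ^ 2) ^ 2 * (1 - X ^ 4) : ℤ[X]) ∣
      (1 - X ^ (2 * n)) *
        ((1 - X ^ (2 * n + 2)) * (1 - X ^ (2 * n - 2)) -
          X ^ 2 * (1 - X ^ (4 * ((n - 1) / 2))) * (1 - X ^ (4 * (n / 2)))) := by
  rcases Nat.even_or_odd n with ⟨k, hk⟩ | ⟨k, hk⟩
  · -- n even, n = 2*m+2
    obtain ⟨m, hm⟩ : ∃ m, n = 2 * m + 2 := ⟨k - 1, by omega⟩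
    have e1 : 2 * n = 4 * m + 4 := by omega
    have e2 : 2 * n + 2 = 4 * m + 6 := by omega
    have e3 : 2 * n - 2 = 4 * m + 2 := by omega
    have e4 : 4 * ((n - 1) / 2) = 4 * m := by omega
    have e5 : 4 * (n / 2) = 4 * m + 4 := by omega
    rw [e2, e3, e4, e5, e1]
    obtain ⟨c, hc⟩ := one_sub_pow_dvd 4 (m + 1)
    obtain ⟨d, hd⟩ := one_sub_pow_dvd 2 (4 * m + 3)
    have ec : (4 * (m + 1)) = 4 * m + 4 := by ring
    have ed : (2 * (4 * m + 3)) = 8 * m + 6 := by ring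
    rw [ec] at hc
    rw [ed] at hd
    refine ⟨c * d, ?_⟩
    linear_combination ((1 - X ^ (4 * m + 6)) * (1 - X ^ (4 * m + 2)) -
        X ^ 2 * (1 - X ^ (4 * m)) * (1 - X ^ (4 * m + 4))) * hc +
      ((1 : ℤ[X]) - X ^ 4) * c * (1 - X ^ 2) * hd
  · -- n odd, n = 2*m+3
    obtain ⟨m, hm⟩ : ∃ m, n = 2 * m + 3 := ⟨k - 1, by omega⟩
    have e1 : 2 * n = 4 * m + 6 := by omega
    have e2 : 2 * n + 2 = 4 * m + 8 := by omega
    have e3 : 2 * n - 2 = 4 * m + 4 := by omega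
    have e4 : 4 * ((n - 1) / 2) = 4 * m + 4 := by omega
    have e5 : 4 * (n / 2) = 4 * m + 4 := by omega
    rw [e2, e3, e4, e5, e1]
    obtain ⟨c, hc⟩ := one_sub_pow_dvd 4 (m + 1)
    obtain ⟨d, hd⟩ := one_sub_pow_dvd 2 (2 * m + 3)
    have ec : (4 * (m + 1)) = 4 * m + 4 := by ring
    have ed : (2 * (2 * m + 3)) = 4 * m + 6 := by ring
    rw [ec] at hc
    rw [ed] at hd
    refine ⟨c * d * (1 + X ^ (4 * m + 6)), ?_⟩
    linear_combination ((1 - X ^ (4 * m + 8)) * (1 - X ^ (4 * m + 4)) -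
        X ^ 2 * (1 - X ^ (4 * m + 4)) * (1 - X ^ (4 * m + 4))) * hd +
      ((1 : ℤ[X]) - X ^ 2) * d * (1 - X ^ 2) * (1 + X ^ (4 * m + 6)) * hc
end
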